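/- Let α = (α₁, α₂, α₃, α₄) ∈ ℝ₊⁴ and let υ : ℝ₊ → ℝ₊ be increasing with lim_{t→0} υ(t) = 0. Define R(d) by 1/R(d) = υ^{-1}(d) for d ≤ 1 (with υ^{-1}(y) = sup{x : υ(x) ≤ y}) and 1/R(d) = υ^{-1}(1) otherwise. Then there exists a modulus of continuity ι = ι_α (increasing with ι(t) → 0 as t → 0) such that for all ρ ∈ (0, 1/2] and all d > ι(ρ) one has ρ^{α₁} < d^{α₂} / (α₃ e^{α₄ R(d)}). -/

import Mathlib

open Filter Set

noncomputable section

/-- given `α ∈ ℝ₊⁴` and an increasing `υ : ℝ₊ → ℝ₊` with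
`υ(t) → 0` as `t → 0⁺`, define `R(d)` by `1/R(d) = υ⁻¹(d)` for `d ≤ 1` and
`1/R(d) = υ⁻¹(1)` otherwise, where `υ⁻¹(y) = sup{x > 0 : υ(x) ≤ y}`.  Then there is
a modulus of continuity `ι = ι_α` (increasing, `ι(t) → 0` as `t → 0⁺`) such that for
all `ρ ∈ (0, 1/2]` and all `d > ι(ρ)` one has
`ρ^{α₁} < d^{α₂} / (α₃ e^{α₄ R(d)})`. -/
theorem stmt11 (α₁ α₂ α₃ α₄ : ℝ) (h₁ : 0 < α₁) (h₂ : 0 < α₂) (h₃ : 0 < α₃)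
    (h₄ : 0 < α₄) (υ R : ℝ → ℝ)
    (hmono : MonotoneOn υ (Ioi 0)) (hnonneg : ∀ t, 0 < t → 0 ≤ υ t)
    (hlim : Tendsto υ (nhdsWithin 0 (Ioi 0)) (nhds 0))
    (hRpos : ∀ d, 0 < d → 0 < R d)
    (hbdd : ∀ y, 0 < y → BddAbove {x : ℝ | 0 < x ∧ υ x ≤ y})
    (hR1 : ∀ d, 0 < d → d ≤ 1 → (R d)⁻¹ = sSup {x : ℝ | 0 < x ∧ υ x ≤ d})
    (hR2 : ∀ d, 1 < d → (R d)⁻¹ = sSup {x : ℝ | 0 < x ∧ υ x ≤ 1}) :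
    ∃ ι : ℝ → ℝ, MonotoneOn ι (Ioi 0) ∧ (∀ t, 0 < t → 0 ≤ ι t) ∧
      Tendsto ι (nhdsWithin 0 (Ioi 0)) (nhds 0) ∧
      ∀ ρ : ℝ, 0 < ρ → ρ ≤ 1 / 2 → ∀ d : ℝ, ι ρ < d →
        ρ ^ α₁ < d ^ α₂ / (α₃ * Real.exp (α₄ * R d)) := by
  set f : ℝ → ℝ := fun d => d ^ α₂ / (α₃ * Real.exp (α₄ * R d)) with hfdef
  -- nonemptiness of the level sets
  have hne : ∀ y : ℝ, 0 < y → ({x : ℝ | 0 < x ∧ υ x ≤ y}).Nonempty := by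
    intro y hy
    have h1 : υ ⁻¹' (Iio y) ∈ nhdsWithin (0:ℝ) (Ioi 0) := hlim (Iio_mem_nhds hy)
    have h2 : υ ⁻¹' (Iio y) ∩ Ioi 0 ∈ nhdsWithin (0:ℝ) (Ioi 0) :=
      inter_mem h1 self_mem_nhdsWithin
    obtain ⟨x, hx1, hx2⟩ := Filter.nonempty_of_mem h2
    exact ⟨x, hx2, le_of_lt hx1⟩
  -- R is antitone on (0, ∞)
  have hRanti : ∀ d d' : ℝ, 0 < d → d ≤ d' → R d' ≤ R d := by
    intro d d' hd hdd'
    have hd' : 0 < d' := lt_of_lt_of_le hd hdd'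
    have key : (R d)⁻¹ ≤ (R d')⁻¹ := by
      rcases le_or_gt d' 1 with h1' | h1'
      · rw [hR1 d hd (le_trans hdd' h1'), hR1 d' hd' h1']
        exact csSup_le_csSup (hbdd d' hd') (hne d hd)
          (fun x hx => ⟨hx.1, le_trans hx.2 hdd'⟩)
      · rcases le_or_gt d 1 with h1 | h1
        · rw [hR1 d hd h1, hR2 d' h1']
          exact csSup_le_csSup (hbdd 1 one_pos) (hne d hd)
            (fun x hx => ⟨hx.1, le_trans hx.2 h1⟩)
        · rw [hR2 d h1, hR2 d' h1']
    exact (inv_le_inv₀ (hRpos d hd) (hRpos d' hd')).mp key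
  -- positivity of f
  have hfpos : ∀ d : ℝ, 0 < d → 0 < f d := by
    intro d hd
    exact div_pos (Real.rpow_pos_of_pos hd α₂) (mul_pos h₃ (Real.exp_pos _))
  -- monotonicity of f on (0, ∞)
  have hfmono : ∀ d d' : ℝ, 0 < d → d ≤ d' → f d ≤ f d' := by
    intro d d' hd hdd'
    have hd' : 0 < d' := lt_of_lt_of_le hd hdd'
    apply div_le_div₀ (Real.rpow_pos_of_pos hd' α₂).le
      (Real.rpow_le_rpow hd.le hdd' h₂.le)
      (mul_pos h₃ (Real.exp_pos _))
    exact mul_le_mul_of_nonneg_left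
      (Real.exp_le_exp.mpr (mul_le_mul_of_nonneg_left (hRanti d d' hd hdd') h₄.le)) h₃.le
  -- f is unbounded above
  have hfunbdd : ∀ y : ℝ, ∃ d : ℝ, 0 < d ∧ y < f d := by
    intro y
    set K := α₃ * Real.exp (α₄ * R 2) with hK
    have hKpos : 0 < K := mul_pos h₃ (Real.exp_pos _)
    have htop : Tendsto (fun d : ℝ => d ^ α₂) atTop atTop := tendsto_rpow_atTop h₂
    have hev : ∀ᶠ d in atTop, y * K < d ^ α₂ := htop.eventually_gt_atTop (y * K)
    have hev2 : ∀ᶠ d : ℝ in atTop, (2:ℝ) ≤ d := eventually_ge_atTop 2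
    obtain ⟨d, hd1, hd2⟩ := (hev.and hev2).exists
    refine ⟨d, lt_of_lt_of_le two_pos hd2, ?_⟩
    have hdpos : 0 < d := lt_of_lt_of_le two_pos hd2
    have hdenle : α₃ * Real.exp (α₄ * R d) ≤ K := by
      rw [hK]
      exact mul_le_mul_of_nonneg_left
        (Real.exp_le_exp.mpr (mul_le_mul_of_nonneg_left (hRanti 2 d two_pos hd2) h₄.le)) h₃.le
    have h5 : y < d ^ α₂ / K := (lt_div_iff₀ hKpos).mpr hd1
    refine lt_of_lt_of_le h5 ?_
    exact div_le_div_of_nonneg_left (Real.rpow_pos_of_pos hdpos α₂).le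
      (mul_pos h₃ (Real.exp_pos _)) hdenle
  -- define ι
  set S : ℝ → Set ℝ := fun ρ => {d : ℝ | 0 < d ∧ ρ ^ α₁ < f d} with hSdef
  set ι : ℝ → ℝ := fun ρ => sInf (S ρ) with hιdef
  have hSbdd : ∀ ρ : ℝ, BddBelow (S ρ) := fun ρ => ⟨0, fun x hx => hx.1.le⟩
  have hSne : ∀ ρ : ℝ, (S ρ).Nonempty := by
    intro ρ
    obtain ⟨d, hd1, hd2⟩ := hfunbdd (ρ ^ α₁)
    exact ⟨d, hd1, hd2⟩
  have hιnonneg : ∀ ρ : ℝ, 0 ≤ ι ρ := by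
    intro ρ
    exact Real.sInf_nonneg (fun x hx => hx.1.le)
  have hιle : ∀ ρ d : ℝ, d ∈ S ρ → ι ρ ≤ d := fun ρ d hd => csInf_le (hSbdd ρ) hd
  refine ⟨ι, ?_, fun t _ => hιnonneg t, ?_, ?_⟩
  · -- monotone
    intro ρ hρ ρ' hρ' hρρ'
    apply csInf_le_csInf (hSbdd ρ) (hSne ρ')
    intro d hd
    exact ⟨hd.1, lt_of_le_of_lt (Real.rpow_le_rpow (le_of_lt hρ) hρρ' h₁.le) hd.2⟩
  · -- tendsto
    rw [tendsto_order]
    constructor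
    · intro a ha
      exact Filter.Eventually.of_forall (fun ρ => lt_of_lt_of_le ha (hιnonneg ρ))
    · intro ε hε
      have hd₀ : (0:ℝ) < ε / 2 := by linarith
      have hfd₀ : 0 < f (ε / 2) := hfpos _ hd₀
      set δ := (f (ε / 2)) ^ (α₁⁻¹) with hδ
      have hδpos : 0 < δ := Real.rpow_pos_of_pos hfd₀ _
      filter_upwards [Ioo_mem_nhdsGT_of_mem (⟨le_refl (0:ℝ), hδpos⟩ : (0:ℝ) ∈ Ico 0 δ)]
        with ρ hρ
      have hρpow : ρ ^ α₁ < f (ε / 2) := by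
        have := Real.rpow_lt_rpow hρ.1.le hρ.2 h₁
        rwa [hδ, Real.rpow_inv_rpow hfd₀.le (ne_of_gt h₁)] at this
      have : ι ρ ≤ ε / 2 := hιle ρ (ε / 2) ⟨hd₀, hρpow⟩
      linarith
  · -- main inequality
    intro ρ hρ _ d hd
    obtain ⟨d', hd'S, hd'lt⟩ := exists_lt_of_csInf_lt (hSne ρ) hd
    have hfd : f d' ≤ f d := hfmono d' d hd'S.1 hd'lt.le
    exact lt_of_lt_of_le hd'S.2 hfd
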